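/- Let d, n be positive natural numbers, let k, k' : Fin n with k ≠ k', let c : Bool be a verification outcome and y : Bool arbitrary. If a : Fin d → Fin n → Bool is chosen uniformly at random (all d·n bits independent fair coin flips), then the expected value of the cardinality of the index set P_{c,y}(proofSeq a k c, k, k') equals d/4. In particular the expected cardinalities for y = c and y = ¬c are equal, both being d/4. (Proposition 1, equation (15).) -/

import Mathlib

/-- The consistent proof sequence built from the bit sequence `a`, the position `k`
and the verification outcome `c`. -/
def proofSeq {d n : ℕ} (a : Fin d → Fin n → Bool) (k : Fin n) (c : Bool) :
    Fin d → Option (Fin n → Bool) :=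
  fun l => if a l k = c then some (a l) else none

/-- `P_{x,y}(p, k, k')`: the set of indices of non-cryptic tuples of `p` whose bit
in position `k` equals `x` and whose bit in position `k'` equals `y`. -/
def Pxy {d n : ℕ} (p : Fin d → Option (Fin n → Bool)) (k k' : Fin n) (x y : Bool) :
    Finset (Fin d) :=
  Finset.univ.filter (fun l => ∃ t, p l = some t ∧ t k = x ∧ t k' = y)

open Finset

/-- flip map lemma: the updated function lands in the other fiber, and double-update returns. -/
private def flipMap {d n : ℕ} (l : Fin d) (k k' : Fin n) (c' y' : Bool)
    (a : Fin d → Fin n → Bool) : Fin d → Fin n → Bool :=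
  Function.update a l (Function.update (Function.update (a l) k' y') k c')

lemma flipMap_mem {d n : ℕ} (l : Fin d) (k k' : Fin n) (h : k ≠ k') (c' y' : Bool)
    (a : Fin d → Fin n → Bool) :
    flipMap l k k' c' y' a l k = c' ∧ flipMap l k k' c' y' a l k' = y' := by
  constructor <;> simp [flipMap, Function.update_self, Function.update_of_ne h.symm]

lemma flipMap_flipMap {d n : ℕ} (l : Fin d) (k k' : Fin n) (h : k ≠ k') (c y c' y' : Bool)
    (a : Fin d → Fin n → Bool) (hk : a l k = c) (hk' : a l k' = y) :
    flipMap l k k' c y (flipMap l k k' c' y' a) = a := by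
  unfold flipMap
  rw [Function.update_self]
  rw [Function.update_idem]
  have : Function.update (Function.update (Function.update (Function.update (a l) k' y') k c') k' y) k c = a l := by
    funext j
    rcases eq_or_ne j k with rfl | hjk
    · simp [Function.update_self, hk]
    · rw [Function.update_of_ne hjk]
      rcases eq_or_ne j k' with rfl | hjk'
      · simp [Function.update_self, hk']
      · rw [Function.update_of_ne hjk', Function.update_of_ne hjk, Function.update_of_ne hjk']
  rw [this, Function.update_eq_self]

lemma fiber_card_eq {d n : ℕ} (l : Fin d) (k k' : Fin n) (h : k ≠ k') (c y c' y' : Bool) :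
    (univ.filter (fun a : Fin d → Fin n → Bool => a l k = c ∧ a l k' = y)).card
      = (univ.filter (fun a : Fin d → Fin n → Bool => a l k = c' ∧ a l k' = y')).card := by
  apply Finset.card_bij' (fun a _ => flipMap l k k' c' y' a) (fun a _ => flipMap l k k' c y a)
  · intro a ha
    simpa using flipMap_mem l k k' h c' y' a
  · intro a ha
    simpa using flipMap_mem l k k' h c y a
  · intro a ha
    simp only [mem_filter, mem_univ, true_and] at ha
    exact flipMap_flipMap l k k' h c y c' y' a ha.1 ha.2
  · intro a ha
    simp only [mem_filter, mem_univ, true_and] at ha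
    exact flipMap_flipMap l k k' h c' y' c y a ha.1 ha.2

lemma four_mul_fiber {d n : ℕ} (l : Fin d) (k k' : Fin n) (h : k ≠ k') (c y : Bool) :
    4 * (univ.filter (fun a : Fin d → Fin n → Bool => a l k = c ∧ a l k' = y)).card
      = Fintype.card (Fin d → Fin n → Bool) := by
  have hpart := Finset.card_eq_sum_card_fiberwise
    (f := fun a : Fin d → Fin n → Bool => (a l k, a l k')) (s := (univ : Finset (Fin d → Fin n → Bool))) (t := (univ : Finset (Bool × Bool)))
    (fun x _ => mem_univ _)
  rw [← Finset.card_univ, hpart]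
  have : ∀ p : Bool × Bool,
      (univ.filter (fun a : Fin d → Fin n → Bool => (a l k, a l k') = p)).card
        = (univ.filter (fun a : Fin d → Fin n → Bool => a l k = c ∧ a l k' = y)).card := by
    intro p
    rw [← fiber_card_eq l k k' h p.1 p.2 c y]
    congr 1
    ext a
    simp [Prod.ext_iff]
  rw [Finset.sum_congr rfl (fun p _ => this p)]
  simp [Finset.sum_const, mul_comm]

/-- Proposition 1, equation (15): for `k ≠ k'` and any bit `y`, the expected
cardinality of `P_{c,y}(proofSeq a k c, k, k')` under the uniform distribution
on `a` is `d / 4` (in particular the expected cardinalities for `y = c` and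
`y = ¬c` coincide, both being `d / 4`). -/
theorem expected_card_Pxy (d n : ℕ) (hd : 0 < d) (hn : 0 < n) (k k' : Fin n)
    (hkk' : k ≠ k') (c y : Bool) :
    (∑ a : Fin d → Fin n → Bool,
      ((PMF.uniformOfFintype (Fin d → Fin n → Bool)) a).toReal *
        ((Pxy (proofSeq a k c) k k' c y).card : ℝ)) = d / 4 := by
  have hP : ∀ a : Fin d → Fin n → Bool,
      Pxy (proofSeq a k c) k k' c y = univ.filter (fun l => a l k = c ∧ a l k' = y) := by
    intro a
    ext l
    rw [Pxy, mem_filter, mem_filter]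
    simp only [proofSeq, mem_univ, true_and]
    constructor
    · rintro ⟨t, ht, htk, htk'⟩
      split_ifs at ht with hc
      · obtain rfl : a l = t := by injection ht
        exact ⟨htk, htk'⟩
    · rintro ⟨h1, h2⟩
      exact ⟨a l, by simp [h1], h1, h2⟩
  have hconst : ∀ a : Fin d → Fin n → Bool,
      ((PMF.uniformOfFintype (Fin d → Fin n → Bool)) a).toReal
        = ((Fintype.card (Fin d → Fin n → Bool) : ℝ))⁻¹ := by
    intro a
    rw [PMF.uniformOfFintype_apply]
    rw [ENNReal.toReal_inv, ENNReal.toReal_natCast]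
  have hcard : ∀ a : Fin d → Fin n → Bool, (Pxy (proofSeq a k c) k k' c y).card
      = ∑ l : Fin d, if a l k = c ∧ a l k' = y then 1 else 0 := by
    intro a; rw [hP a, Finset.card_filter]
  have hsum4 : 4 * ∑ a : Fin d → Fin n → Bool, (Pxy (proofSeq a k c) k k' c y).card
      = d * Fintype.card (Fin d → Fin n → Bool) := by
    rw [Finset.sum_congr rfl (fun a _ => hcard a), Finset.sum_comm, Finset.mul_sum]
    have h2 : ∀ l : Fin d,
        4 * ∑ a : Fin d → Fin n → Bool, (if a l k = c ∧ a l k' = y then 1 else 0)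
          = Fintype.card (Fin d → Fin n → Bool) := by
      intro l
      rw [← Finset.card_filter]
      exact four_mul_fiber l k k' hkk' c y
    rw [Finset.sum_congr rfl (fun l _ => h2 l), Finset.sum_const, Finset.card_univ,
      Fintype.card_fin, smul_eq_mul]
  have hNpos : (0 : ℝ) < Fintype.card (Fin d → Fin n → Bool) := by
    exact_mod_cast Fintype.card_pos
  calc (∑ a : Fin d → Fin n → Bool,
      ((PMF.uniformOfFintype (Fin d → Fin n → Bool)) a).toReal *
        ((Pxy (proofSeq a k c) k k' c y).card : ℝ))
      = ((Fintype.card (Fin d → Fin n → Bool) : ℝ))⁻¹ *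
        ((∑ a : Fin d → Fin n → Bool, (Pxy (proofSeq a k c) k k' c y).card : ℕ) : ℝ) := by
        rw [Nat.cast_sum, Finset.mul_sum]
        exact Finset.sum_congr rfl (fun a _ => by rw [hconst a])
    _ = d / 4 := by
        have h4 : (4 : ℝ) * ((∑ a : Fin d → Fin n → Bool, (Pxy (proofSeq a k c) k k' c y).card : ℕ) : ℝ)
            = (d : ℝ) * (Fintype.card (Fin d → Fin n → Bool) : ℝ) := by exact_mod_cast hsum4
        rw [inv_mul_eq_div, div_eq_div_iff hNpos.ne' (by norm_num)]
        linarith
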